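/- Let a < 0 < b with b > -a and let Δ_{LK,1}(t) = Δ(t) - M·1_{[a,b]}(t) with Δ as in the Case-1 left-knot construction and M = b(5b-a)/(2(5b+a)). Then ∫_a^b t·Δ_{LK,1}(t) dt = -(5/12)·((b-a)b³/(5b+a)) ≤ -b³/12, and ∫_a^b t²·Δ_{LK,1}(t) dt ≤ -b⁴/12. -/

import Mathlib

set_option maxHeartbeats 1000000

/-- Integral of a cubic polynomial. -/
lemma cubint (A B C D x y : ℝ) :
    (∫ t in x..y, (A*t^3 + B*t^2 + C*t + D)) =
      A*(y^4-x^4)/4 + B*(y^3-x^3)/3 + C*(y^2-x^2)/2 + D*(y-x) := by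
  have h : ∀ t ∈ Set.uIcc x y,
      HasDerivAt (fun t => A/4*t^4 + B/3*t^3 + C/2*t^2 + D*t)
        (A*t^3 + B*t^2 + C*t + D) t := by
    intro t _
    have h4 : HasDerivAt (fun t : ℝ => t^4) (4*t^3) t := by simpa using hasDerivAt_pow 4 t
    have h3 : HasDerivAt (fun t : ℝ => t^3) (3*t^2) t := by simpa using hasDerivAt_pow 3 t
    have h2 : HasDerivAt (fun t : ℝ => t^2) (2*t) t := by simpa using hasDerivAt_pow 2 t
    have h1 : HasDerivAt (fun t : ℝ => t) 1 t := hasDerivAt_id t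
    have := (((h4.const_mul (A/4)).add (h3.const_mul (B/3))).add
      (h2.const_mul (C/2))).add (h1.const_mul D)
    exact this.congr_deriv (by ring)
  rw [intervalIntegral.integral_eq_sub_of_hasDerivAt h
    (Continuous.intervalIntegrable (by continuity) x y)]
  ring

/-- Monomial integrals of the shifted Case-1 left-knot perturbation
`Δ_{LK,1} = Δ - M·1_{[a,b]}` with `M = b(5b-a)/(2(5b+a))`. -/
theorem stmt16 (a b : ℝ) (ha : a < 0) (hb : 0 < b) (hba : -a < b)
    (m₂ M : ℝ)
    (hm₂ : m₂ = ((-9 - 3 * (b / (-a))) / (1 - 5 * (b / (-a)))) * (b / (-a)))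
    (hM : M = b * (5*b - a) / (2 * (5*b + a)))
    (Δ Δ₁ : ℝ → ℝ)
    (hΔ : ∀ t ∈ Set.Icc a b,
      Δ t = if t ≤ a/4 then ((b + m₂ * (-a/4)) / (a/4 - a)) * (t - a)
        else if t ≤ 0 then b + m₂ * (-t) else b - t)
    (hΔ₁ : ∀ t ∈ Set.Icc a b, Δ₁ t = Δ t - M) :
    (∫ t in a..b, t * Δ₁ t) = -(5/12) * ((b - a) * b^3 / (5*b + a)) ∧
    -(5/12) * ((b - a) * b^3 / (5*b + a)) ≤ -b^3/12 ∧
    (∫ t in a..b, t^2 * Δ₁ t) ≤ -b^4/12 := by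
  have hab : a ≤ b := le_of_lt (ha.trans hb)
  have hca : a < a/4 := by linarith
  have hc0 : a/4 < 0 := by linarith
  have h5 : 0 < 5*b + a := by linarith
  have h5ne : (5:ℝ)*b + a ≠ 0 := ne_of_gt h5
  have hane : a ≠ 0 := ne_of_lt ha
  have hK : a/4 - a ≠ 0 := by intro h; linarith [h]
  set K : ℝ := (b + m₂ * (-a/4)) / (a/4 - a) with hKdef
  have hKc : K * (a/4 - a) = b + m₂ * (-a/4) := div_mul_cancel₀ _ hK
  have hm₂den : (1 : ℝ) - 5 * (b / (-a)) ≠ 0 := by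
    have hlt : 1 < b / (-a) := (one_lt_div (neg_pos.mpr ha)).mpr hba
    have : (1:ℝ) - 5 * (b / (-a)) < 0 := by linarith
    exact ne_of_lt this
  have hm₂' : m₂ = 3*b*(3*a - b) / (a*(5*b + a)) := by
    have hnega : (-a : ℝ) ≠ 0 := neg_ne_zero.mpr hane
    rw [hm₂, div_mul_eq_mul_div, div_eq_div_iff hm₂den (mul_ne_zero hane h5ne)]
    field_simp
    ring
  have hKval : K = -(b*(23*b - 5*a)) / (3*a*(5*b + a)) := by
    rw [hKdef, hm₂', div_eq_div_iff hK (by intro h; rcases mul_eq_zero.mp h with h' | h'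
                                           · rcases mul_eq_zero.mp h' with h'' | h''
                                             · norm_num at h''
                                             · exact hane h''
                                           · exact h5ne h')]
    field_simp [show b*5+a ≠ 0 by linarith]
    ring
  -- the glued function is continuous
  have hgcont : Continuous (fun t : ℝ =>
      (if t ≤ a/4 then K * (t - a) else if t ≤ 0 then b + m₂ * (-t) else b - t) - M) := by
    apply Continuous.sub _ continuous_const
    apply Continuous.if_le
    · exact continuous_const.mul (continuous_id.sub continuous_const)
    · apply Continuous.if_le (continuous_const.add (continuous_const.mul continuous_neg))
        (continuous_const.sub continuous_id) continuous_id continuous_const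
      intro x hx
      have hx' : x = 0 := hx
      subst hx'
      norm_num
    · exact continuous_id
    · exact continuous_const
    · intro x hx
      have hx' : x = a/4 := hx
      subst hx'
      rw [if_pos hc0.le, hKc]
      ring
  -- generic splitting of the integral
  have hsplit : ∀ f : ℝ → ℝ, Continuous f →
      (∫ t in a..b, f t * Δ₁ t) =
        (∫ t in a..(a/4), f t * (K * (t - a) - M)) +
        (∫ t in (a/4)..0, f t * (b + m₂ * (-t) - M)) +
        (∫ t in (0:ℝ)..b, f t * (b - t - M)) := by
    intro f hf
    have h1 : (∫ t in a..b, f t * Δ₁ t) = ∫ t in a..b, f t *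
        ((if t ≤ a/4 then K * (t - a) else if t ≤ 0 then b + m₂ * (-t) else b - t) - M) := by
      apply intervalIntegral.integral_congr
      intro t ht
      rw [Set.uIcc_of_le hab] at ht
      beta_reduce
      rw [hΔ₁ t ht, hΔ t ht]
    rw [h1]
    have hint : ∀ x y : ℝ, IntervalIntegrable (fun t => f t *
        ((if t ≤ a/4 then K * (t - a) else if t ≤ 0 then b + m₂ * (-t) else b - t) - M))
        MeasureTheory.volume x y := fun x y =>
      Continuous.intervalIntegrable (hf.mul hgcont) x y
    rw [← intervalIntegral.integral_add_adjacent_intervals (hint a (a/4)) (hint (a/4) b),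
      ← intervalIntegral.integral_add_adjacent_intervals (hint (a/4) 0) (hint 0 b)]
    have e1 : (∫ t in a..(a/4), f t *
        ((if t ≤ a/4 then K * (t - a) else if t ≤ 0 then b + m₂ * (-t) else b - t) - M)) =
        ∫ t in a..(a/4), f t * (K * (t - a) - M) := by
      apply intervalIntegral.integral_congr
      intro t ht
      rw [Set.uIcc_of_le hca.le] at ht
      beta_reduce
      rw [if_pos ht.2]
    have e2 : (∫ t in (a/4)..0, f t *
        ((if t ≤ a/4 then K * (t - a) else if t ≤ 0 then b + m₂ * (-t) else b - t) - M)) =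
        ∫ t in (a/4)..0, f t * (b + m₂ * (-t) - M) := by
      apply intervalIntegral.integral_congr
      intro t ht
      rw [Set.uIcc_of_le hc0.le] at ht
      beta_reduce
      by_cases h : t ≤ a/4
      · have heq : t = a/4 := le_antisymm h ht.1
        subst heq
        rw [if_pos le_rfl, hKc]
        ring
      · rw [if_neg h, if_pos ht.2]
    have e3 : (∫ t in (0:ℝ)..b, f t *
        ((if t ≤ a/4 then K * (t - a) else if t ≤ 0 then b + m₂ * (-t) else b - t) - M)) =
        ∫ t in (0:ℝ)..b, f t * (b - t - M) := by
      apply intervalIntegral.integral_congr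
      intro t ht
      rw [Set.uIcc_of_le hb.le] at ht
      beta_reduce
      rw [if_neg (not_le.mpr (lt_of_lt_of_le hc0 ht.1))]
      by_cases h : t ≤ 0
      · have heq : t = 0 := le_antisymm h ht.1
        subst heq
        rw [if_pos le_rfl]
        ring
      · rw [if_neg h]
    rw [e1, e2, e3]
    ring
  -- first moment
  have I1 : (∫ t in a..b, t * Δ₁ t) =
      -(5/12) * ((b - a) * b^3 / (5*b + a)) := by
    rw [hsplit (fun t => t) continuous_id]
    have p1 : (∫ t in a..(a/4), t * (K * (t - a) - M)) =
        ∫ t in a..(a/4), ((0:ℝ)*t^3 + K*t^2 + (-(K*a) - M)*t + 0) := by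
      apply intervalIntegral.integral_congr; intro t _; beta_reduce; ring
    have p2 : (∫ t in (a/4)..0, t * (b + m₂ * (-t) - M)) =
        ∫ t in (a/4)..(0:ℝ), ((0:ℝ)*t^3 + (-m₂)*t^2 + (b - M)*t + 0) := by
      apply intervalIntegral.integral_congr; intro t _; beta_reduce; ring
    have p3 : (∫ t in (0:ℝ)..b, t * (b - t - M)) =
        ∫ t in (0:ℝ)..b, ((0:ℝ)*t^3 + (-1)*t^2 + (b - M)*t + 0) := by
      apply intervalIntegral.integral_congr; intro t _; beta_reduce; ring
    rw [p1, p2, p3, cubint, cubint, cubint, hKval, hm₂', hM]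
    field_simp [show a + b*5 ≠ 0 by linarith, show b*5+a ≠ 0 by linarith]
    ring
  -- second inequality
  have I2 : -(5/12) * ((b - a) * b^3 / (5*b + a)) ≤ -b^3/12 := by
    have h1 : -(5/12) * ((b - a) * b^3 / (5*b + a)) = (-(5*((b-a)*b^3))) / (12*(5*b+a)) := by
      field_simp
    rw [h1, div_le_div_iff₀ (by positivity) (by norm_num : (0:ℝ) < 12)]
    nlinarith [mul_pos (neg_pos.mpr ha) (pow_pos hb 3)]
  -- second moment
  have I3 : (∫ t in a..b, t^2 * Δ₁ t) =
      ((-3*a^4*b + 19*a^3*b^2) + 8*(3*a*b^4 - 5*b^5)) / (96*(5*b + a)) := by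
    rw [hsplit (fun t => t^2) (continuous_pow 2)]
    have p1 : (∫ t in a..(a/4), t^2 * (K * (t - a) - M)) =
        ∫ t in a..(a/4), (K*t^3 + (-(K*a) - M)*t^2 + (0:ℝ)*t + 0) := by
      apply intervalIntegral.integral_congr; intro t _; beta_reduce; ring
    have p2 : (∫ t in (a/4)..0, t^2 * (b + m₂ * (-t) - M)) =
        ∫ t in (a/4)..(0:ℝ), ((-m₂)*t^3 + (b - M)*t^2 + (0:ℝ)*t + 0) := by
      apply intervalIntegral.integral_congr; intro t _; beta_reduce; ring
    have p3 : (∫ t in (0:ℝ)..b, t^2 * (b - t - M)) =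
        ∫ t in (0:ℝ)..b, ((-1:ℝ)*t^3 + (b - M)*t^2 + (0:ℝ)*t + 0) := by
      apply intervalIntegral.integral_congr; intro t _; beta_reduce; ring
    rw [p1, p2, p3, cubint, cubint, cubint, hKval, hm₂', hM]
    field_simp [show a + b*5 ≠ 0 by linarith, show b*5+a ≠ 0 by linarith]
    ring
  refine ⟨I1, I2, ?_⟩
  rw [I3]
  have ha4 : (0:ℝ) < a^4 := by positivity
  have ha3 : a^3 < 0 := Odd.pow_neg (by decide) ha
  have t1 : 0 < a^4 * b := mul_pos ha4 hb
  have t2 : a^3 * b^2 < 0 := mul_neg_of_neg_of_pos ha3 (by positivity)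
  have t3 : a * b^4 < 0 := mul_neg_of_neg_of_pos ha (by positivity)
  rw [div_le_div_iff₀ (by positivity) (by norm_num : (0:ℝ) < 12)]
  nlinarith [t1, t2, t3]
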